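/- Let h : ℝ → ℝ be 12 times continuously differentiable on [-1,1] with h^{(12)}(t) ≥ 0 for all t ∈ (-1,1), and let f be a real polynomial of degree at most 11 satisfying f(a) = h(a) and f'(a) = h'(a) for each a ∈ {-1, -1/6, 0, 1/6}, and f(b) = h(b) for each b ∈ {-1/2, -1/3, 1/3, 1/2}. Then f(t) ≤ h(t) for every t ∈ [-1,1] \ T₂, where T₂ = (-1/2,-1/3) ∪ (1/3,1/2). -/

import Mathlib

/-- The avoiding set `T₂ = (-1/2,-1/3) ∪ (1/3,1/2)`. -/
def T2 : Set ℝ := Set.Ioo (-1/2) (-1/3) ∪ Set.Ioo (1/3) (1/2)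

open Polynomial Set

lemma rolle_finset (g g' : ℝ → ℝ) (a b : ℝ)
    (hg : ContinuousOn g (Set.Icc a b))
    (hg' : ∀ x ∈ Set.Ioo a b, HasDerivAt g (g' x) x) :
    ∀ (n : ℕ) (S : Finset ℝ), S.card = n → ↑S ⊆ Set.Icc a b →
      (∀ x ∈ S, g x = 0) →
      ∃ T : Finset ℝ, ↑T ⊆ Set.Ioo a b ∧ T.card = n - 1 ∧
        (∀ x ∈ T, g' x = 0) ∧ (∀ x ∈ T, x ∉ S) ∧
        (∀ x ∈ T, ∀ y : ℝ, (∀ z ∈ S, z ≤ y) → x < y) := by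
  intro n
  induction n with
  | zero => intro S _ _ _; exact ⟨∅, by simp, by simp, by simp, by simp, by simp⟩
  | succ n ih =>
    intro S hcard hsub hzero
    rcases Nat.eq_zero_or_pos n with hn | hn
    · exact ⟨∅, by simp, by simp [hn], by simp, by simp, by simp⟩
    · have hSne : S.Nonempty := Finset.card_pos.mp (by omega)
      set M := S.max' hSne with hM
      have hMS : M ∈ S := S.max'_mem hSne
      set S' := S.erase M with hS'
      have hcard' : S'.card = n := by
        rw [hS', Finset.card_erase_of_mem hMS, hcard, Nat.add_sub_cancel]
      have hS'ne : S'.Nonempty := Finset.card_pos.mp (by omega)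
      set M' := S'.max' hS'ne with hM'
      have hM'S' : M' ∈ S' := S'.max'_mem hS'ne
      have hM'S : M' ∈ S := Finset.mem_of_mem_erase hM'S'
      have hM'M : M' < M := lt_of_le_of_ne (S.le_max' _ hM'S) (Finset.ne_of_mem_erase hM'S')
      obtain ⟨T', hT'sub, hT'card, hT'zero, hT'nS, hT'lt⟩ :=
        ih S' hcard' (fun x hx => hsub (Finset.mem_coe.mpr (Finset.mem_of_mem_erase hx)))
          (fun x hx => hzero x (Finset.mem_of_mem_erase hx))
      have hMab : M ∈ Set.Icc a b := hsub hMS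
      have hM'ab : M' ∈ Set.Icc a b := hsub hM'S
      have hIccsub : Set.Icc M' M ⊆ Set.Icc a b := Set.Icc_subset_Icc hM'ab.1 hMab.2
      have hIoosub : Set.Ioo M' M ⊆ Set.Ioo a b := fun x hx =>
        ⟨lt_of_le_of_lt hM'ab.1 hx.1, lt_of_lt_of_le hx.2 hMab.2⟩
      obtain ⟨c, hc, hc0⟩ := exists_hasDerivAt_eq_zero hM'M (hg.mono hIccsub)
        (by rw [hzero M' hM'S, hzero M hMS]) (fun x hx => hg' x (hIoosub hx))
      have hT'M' : ∀ x ∈ T', x < M' := fun x hx =>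
        hT'lt x hx M' (fun z hz => S'.le_max' z hz)
      have hcT' : c ∉ T' := fun hcT => absurd hc.1 (not_lt.mpr (le_of_lt (hT'M' c hcT)))
      refine ⟨insert c T', ?_, ?_, ?_, ?_, ?_⟩
      · rw [Finset.coe_insert, Set.insert_subset_iff]
        exact ⟨hIoosub hc, hT'sub⟩
      · rw [Finset.card_insert_of_notMem hcT', hT'card]; omega
      · intro x hx
        rcases Finset.mem_insert.mp hx with rfl | hx'
        · exact hc0
        · exact hT'zero x hx'
      · intro x hx hxS
        rcases Finset.mem_insert.mp hx with rfl | hx'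
        · rcases eq_or_ne x M with rfl | hxM
          · exact absurd hc.2 (lt_irrefl _)
          · exact absurd (S'.le_max' x (Finset.mem_erase.mpr ⟨hxM, hxS⟩)) (not_le.mpr hc.1)
        · rcases eq_or_ne x M with rfl | hxM
          · exact absurd (lt_trans (hT'M' _ hx') hM'M) (lt_irrefl _)
          · exact hT'nS x hx' (Finset.mem_erase.mpr ⟨hxM, hxS⟩)
      · intro x hx y hy
        rcases Finset.mem_insert.mp hx with rfl | hx'
        · exact lt_of_lt_of_le hc.2 (hy M hMS)
        · exact lt_of_lt_of_le (hT'M' x hx') (hy M' hM'S)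

lemma iter_rolle (a b : ℝ)
    (rolle : ∀ (g g' : ℝ → ℝ), ContinuousOn g (Set.Icc a b) →
      (∀ x ∈ Set.Ioo a b, HasDerivAt g (g' x) x) →
      ∀ (n : ℕ) (S : Finset ℝ), S.card = n → ↑S ⊆ Set.Icc a b →
      (∀ x ∈ S, g x = 0) →
      ∃ T : Finset ℝ, ↑T ⊆ Set.Ioo a b ∧ T.card = n - 1 ∧
        (∀ x ∈ T, g' x = 0) ∧ (∀ x ∈ T, x ∉ S) ∧
        (∀ x ∈ T, ∀ y : ℝ, (∀ z ∈ S, z ≤ y) → x < y)) :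
    ∀ (n : ℕ) (G : ℕ → ℝ → ℝ),
      (∀ k ≤ n, ContinuousOn (G k) (Set.Icc a b)) →
      (∀ k ≤ n, ∀ x ∈ Set.Ioo a b, HasDerivAt (G k) (G (k+1) x) x) →
      ∀ S : Finset ℝ, ↑S ⊆ Set.Icc a b → n + 2 ≤ S.card →
        (∀ x ∈ S, G 0 x = 0) →
        ∃ ξ ∈ Set.Ioo a b, G (n+1) ξ = 0 := by
  intro n
  induction n with
  | zero =>
    intro G hcont hderiv S hsub hcard hzero
    obtain ⟨T, hTsub, hTcard, hTzero, -, -⟩ :=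
      rolle (G 0) (G 1) (hcont 0 le_rfl) (hderiv 0 le_rfl) S.card S rfl hsub hzero
    have hTne : T.Nonempty := Finset.card_pos.mp (by omega)
    obtain ⟨ξ, hξ⟩ := hTne
    exact ⟨ξ, hTsub hξ, hTzero ξ hξ⟩
  | succ n ih =>
    intro G hcont hderiv S hsub hcard hzero
    obtain ⟨T, hTsub, hTcard, hTzero, -, -⟩ :=
      rolle (G 0) (G 1) (hcont 0 (by omega)) (hderiv 0 (by omega)) S.card S rfl hsub hzero
    exact ih (fun k => G (k+1)) (fun k hk => hcont (k+1) (by omega))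
      (fun k hk => hderiv (k+1) (by omega)) T
      (fun x hx => Set.Ioo_subset_Icc_self (hTsub hx)) (by omega) hTzero

noncomputable def w2 : Polynomial ℝ :=
  (X + C 1)^2 * X^2 * (X + C (1/6))^2 * (X - C (1/6))^2 *
    ((X + C (1/2)) * (X + C (1/3)) * (X - C (1/3)) * (X - C (1/2)))

lemma w2_eval (x : ℝ) : w2.eval x =
    (x + 1)^2 * x^2 * (x + 1/6)^2 * (x - 1/6)^2 *
      ((x + 1/2) * (x + 1/3) * (x - 1/3) * (x - 1/2)) := by
  simp [w2]

lemma w2_natDegree : w2.natDegree = 12 := by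
  unfold w2; compute_degree!

lemma w2_monic : w2.Monic := by
  unfold w2
  exact ((((((monic_X_add_C 1).pow 2).mul (monic_X.pow 2)).mul
    ((monic_X_add_C (1/6)).pow 2)).mul ((monic_X_sub_C (1/6)).pow 2)).mul
    ((((monic_X_add_C (1/2)).mul (monic_X_add_C (1/3))).mul
      (monic_X_sub_C (1/3))).mul (monic_X_sub_C (1/2))))

lemma w2_deriv12 (x : ℝ) : (Polynomial.derivative^[12] w2).eval x = 479001600 := by
  have hd : (Polynomial.derivative^[12] w2).natDegree = 0 := by
    have := Polynomial.natDegree_iterate_derivative w2 12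
    rw [w2_natDegree] at this; omega
  rw [Polynomial.eq_C_of_natDegree_le_zero hd.le, Polynomial.eval_C,
    Polynomial.coeff_iterate_derivative]
  have h12 : w2.coeff 12 = 1 := by
    have := w2_monic
    rw [Polynomial.Monic, Polynomial.leadingCoeff, w2_natDegree] at this
    simpa using this
  rw [zero_add] at *
  rw [h12]
  norm_num [Nat.descFactorial]

lemma w2_deriv_double : ∀ a ∈ ({-1, -1/6, 0, 1/6} : Set ℝ),
    (Polynomial.derivative w2).eval a = 0 := by
  intro a ha
  have : Polynomial.derivative w2 =
      Polynomial.derivative ((X + C 1)^2 * X^2 * (X + C (1/6))^2 * (X - C (1/6))^2 *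
        ((X + C (1/2)) * (X + C (1/3)) * (X - C (1/3)) * (X - C (1/2)))) := by rw [w2]
  rw [this]
  rcases ha with rfl | rfl | rfl | rfl <;>
    simp [Polynomial.derivative_mul, Polynomial.derivative_pow] <;> ring_nf <;> norm_num

lemma w2_sign (t : ℝ) (h1 : -1 ≤ t) (h2 : t ≤ 1) (hT : t ∉ T2) :
    0 ≤ (t + 1)^2 * t^2 * (t + 1/6)^2 * (t - 1/6)^2 *
      ((t + 1/2) * (t + 1/3) * (t - 1/3) * (t - 1/2)) := by
  have hsq : (0:ℝ) ≤ (t + 1)^2 * t^2 * (t + 1/6)^2 * (t - 1/6)^2 := by positivity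
  have hA : 0 ≤ (t + 1/2) * (t + 1/3) * (t - 1/3) * (t - 1/2) := by
    simp only [T2, Set.mem_union, Set.mem_Ioo, not_or, not_and, not_lt] at hT
    obtain ⟨hT1, hT2⟩ := hT
    rcases le_or_gt t (-1/2) with h | h
    · have u : 0 ≤ t^2 - 1/4 := by nlinarith
      have v : 0 ≤ t^2 - 1/9 := by nlinarith
      nlinarith [mul_nonneg u v]
    · have h1' : -1/3 ≤ t := hT1 h
      rcases le_or_gt t (1/3) with h' | h'
      · have u : 0 ≤ 1/4 - t^2 := by nlinarith
        have v : 0 ≤ 1/9 - t^2 := by nlinarith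
        nlinarith [mul_nonneg u v]
      · have h2' : 1/2 ≤ t := hT2 h'
        have u : 0 ≤ t^2 - 1/4 := by nlinarith
        have v : 0 ≤ t^2 - 1/9 := by nlinarith
        nlinarith [mul_nonneg u v]
  exact mul_nonneg hsq hA

lemma card9 (t : ℝ) (h1 : t ≠ -1) (h2 : t ≠ -1/2) (h3 : t ≠ -1/3) (h4 : t ≠ -1/6)
    (h5 : t ≠ 0) (h6 : t ≠ 1/6) (h7 : t ≠ 1/3) (h8 : t ≠ 1/2) :
    ({t, -1, -1/2, -1/3, -1/6, 0, 1/6, 1/3, 1/2} : Finset ℝ).card = 9 := by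
  rw [Finset.card_insert_of_notMem (by
    simp only [Finset.mem_insert, Finset.mem_singleton]
    push_neg
    exact ⟨h1, h2, h3, h4, h5, h6, h7, h8⟩)]
  repeat rw [Finset.card_insert_of_notMem (by norm_num)]
  simp

lemma card_union12 (T : Finset ℝ) (hT : T.card = 8)
    (hdisj : ∀ x ∈ T, x ∉ ({-1, -1/6, 0, 1/6} : Finset ℝ)) :
    (T ∪ {-1, -1/6, 0, 1/6}).card = 12 := by
  rw [Finset.card_union_of_disjoint (Finset.disjoint_left.mpr hdisj), hT]
  rw [show ({-1, -1/6, 0, 1/6} : Finset ℝ).card = 4 by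
    repeat rw [Finset.card_insert_of_notMem (by norm_num)]
    simp]


noncomputable def Gf (h : ℝ → ℝ) (f w : Polynomial ℝ) (c : ℝ) (k : ℕ) (x : ℝ) : ℝ :=
  iteratedDerivWithin k h (Set.Icc (-1 : ℝ) 1) x - (Polynomial.derivative^[k] f).eval x
    - c * (Polynomial.derivative^[k] w).eval x

lemma Gf_cont (h : ℝ → ℝ) (f w : Polynomial ℝ) (c : ℝ)
    (hsmooth : ContDiffOn ℝ 12 h (Set.Icc (-1 : ℝ) 1)) :
    ∀ k : ℕ, k ≤ 12 → ContinuousOn (Gf h f w c k) (Set.Icc (-1 : ℝ) 1) := by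
  intro k hk
  have hUD : UniqueDiffOn ℝ (Set.Icc (-1 : ℝ) 1) := uniqueDiffOn_Icc (by norm_num)
  exact ((hsmooth.continuousOn_iteratedDerivWithin (by exact_mod_cast hk) hUD).sub
    (Polynomial.continuous _).continuousOn).sub
    ((continuous_const.mul (Polynomial.continuous _)).continuousOn)

lemma Gf_deriv (h : ℝ → ℝ) (f w : Polynomial ℝ) (c : ℝ)
    (hsmooth : ContDiffOn ℝ 12 h (Set.Icc (-1 : ℝ) 1)) :
    ∀ k : ℕ, k < 12 → ∀ x ∈ Set.Ioo (-1 : ℝ) 1,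
      HasDerivAt (Gf h f w c k) (Gf h f w c (k+1) x) x := by
  intro k hk x hx
  have hUD : UniqueDiffOn ℝ (Set.Icc (-1 : ℝ) 1) := uniqueDiffOn_Icc (by norm_num)
  have hxIcc : x ∈ Set.Icc (-1 : ℝ) 1 := Set.Ioo_subset_Icc_self hx
  have hmem : Set.Icc (-1 : ℝ) 1 ∈ nhds x := Icc_mem_nhds hx.1 hx.2
  have hDW : DifferentiableWithinAt ℝ (iteratedDerivWithin k h (Set.Icc (-1 : ℝ) 1))
      (Set.Icc (-1 : ℝ) 1) x :=
    hsmooth.differentiableOn_iteratedDerivWithin (by exact_mod_cast hk) hUD x hxIcc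
  have hDA := hDW.differentiableAt hmem
  have heq : deriv (iteratedDerivWithin k h (Set.Icc (-1 : ℝ) 1)) x
      = iteratedDerivWithin (k+1) h (Set.Icc (-1 : ℝ) 1) x := by
    rw [iteratedDerivWithin_succ]
    exact (derivWithin_of_mem_nhds hmem).symm
  have H1 : HasDerivAt (iteratedDerivWithin k h (Set.Icc (-1 : ℝ) 1))
      (iteratedDerivWithin (k+1) h (Set.Icc (-1 : ℝ) 1) x) x := heq ▸ hDA.hasDerivAt
  have H2 : HasDerivAt (fun y => (Polynomial.derivative^[k] f).eval y)
      ((Polynomial.derivative^[k+1] f).eval x) x := by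
    rw [Function.iterate_succ_apply']
    exact (Polynomial.derivative^[k] f).hasDerivAt x
  have H3 : HasDerivAt (fun y => (Polynomial.derivative^[k] w).eval y)
      ((Polynomial.derivative^[k+1] w).eval x) x := by
    rw [Function.iterate_succ_apply']
    exact (Polynomial.derivative^[k] w).hasDerivAt x
  exact (H1.sub H2).sub (H3.const_mul c)

theorem hermite_interpolant_below_T2 (h : ℝ → ℝ)
    (hsmooth : ContDiffOn ℝ 12 h (Set.Icc (-1 : ℝ) 1))
    (h12 : ∀ t ∈ Set.Ioo (-1 : ℝ) 1,
      0 ≤ iteratedDerivWithin 12 h (Set.Icc (-1 : ℝ) 1) t)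
    (f : Polynomial ℝ) (hdeg : f.natDegree ≤ 11)
    (hdouble : ∀ a ∈ ({-1, -1/6, 0, 1/6} : Set ℝ),
      f.eval a = h a ∧
        (Polynomial.derivative f).eval a = derivWithin h (Set.Icc (-1 : ℝ) 1) a)
    (hsingle : ∀ b ∈ ({-1/2, -1/3, 1/3, 1/2} : Set ℝ), f.eval b = h b) :
    ∀ t ∈ Set.Icc (-1 : ℝ) 1 \ T2, f.eval t ≤ h t := by
  intro t ht
  obtain ⟨htI, htT⟩ := ht
  have hUD : UniqueDiffOn ℝ (Set.Icc (-1 : ℝ) 1) := uniqueDiffOn_Icc (by norm_num)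
  by_cases hw0 : w2.eval t = 0
  · -- t is one of the nodes, where f t = h t
    rw [w2_eval] at hw0
    simp only [mul_eq_zero, sq_eq_zero_iff] at hw0
    rcases hw0 with ((((h'|h')|h')|h')|(((h'|h')|h')|h'))
    · have ht' : t = -1 := by linarith
      rw [ht']; exact le_of_eq (hdouble (-1) (by norm_num)).1
    · rw [h']; exact le_of_eq (hdouble 0 (by norm_num)).1
    · have ht' : t = -1/6 := by linarith
      rw [ht']; exact le_of_eq (hdouble (-1/6) (by norm_num)).1
    · have ht' : t = 1/6 := by linarith
      rw [ht']; exact le_of_eq (hdouble (1/6) (by norm_num)).1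
    · have ht' : t = -1/2 := by linarith
      rw [ht']; exact le_of_eq (hsingle (-1/2) (by norm_num))
    · have ht' : t = -1/3 := by linarith
      rw [ht']; exact le_of_eq (hsingle (-1/3) (by norm_num))
    · have ht' : t = 1/3 := by linarith
      rw [ht']; exact le_of_eq (hsingle (1/3) (by norm_num))
    · have ht' : t = 1/2 := by linarith
      rw [ht']; exact le_of_eq (hsingle (1/2) (by norm_num))
  · -- main case
    have hwpos : 0 < w2.eval t := by
      rcases lt_or_gt_of_ne hw0 with hlt | hgt
      · exact absurd (by rw [w2_eval]; exact w2_sign t htI.1 htI.2 htT) (not_le.mpr hlt)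
      · exact hgt
    -- t differs from all nodes
    have hne : ∀ u : ℝ, w2.eval u = 0 → t ≠ u := fun u hu htu => hw0 (htu ▸ hu)
    have ht1 : t ≠ -1 := hne _ (by rw [w2_eval]; norm_num)
    have ht2 : t ≠ -1/2 := hne _ (by rw [w2_eval]; norm_num)
    have ht3 : t ≠ -1/3 := hne _ (by rw [w2_eval]; norm_num)
    have ht4 : t ≠ -1/6 := hne _ (by rw [w2_eval]; norm_num)
    have ht5 : t ≠ 0 := hne _ (by rw [w2_eval]; norm_num)
    have ht6 : t ≠ 1/6 := hne _ (by rw [w2_eval]; norm_num)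
    have ht7 : t ≠ 1/3 := hne _ (by rw [w2_eval]; norm_num)
    have ht8 : t ≠ 1/2 := hne _ (by rw [w2_eval]; norm_num)
    set c : ℝ := (h t - f.eval t) / w2.eval t with hc
    -- the zero set of G 0
    set S0 : Finset ℝ := {t, -1, -1/2, -1/3, -1/6, 0, 1/6, 1/3, 1/2} with hS0
    have hS0card : S0.card = 9 := card9 t ht1 ht2 ht3 ht4 ht5 ht6 ht7 ht8
    have hS0sub : ↑S0 ⊆ Set.Icc (-1 : ℝ) 1 := by
      intro x hx
      simp only [hS0, Finset.coe_insert, Set.mem_insert_iff, Finset.coe_singleton,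
        Set.mem_singleton_iff] at hx
      rcases hx with rfl|rfl|rfl|rfl|rfl|rfl|rfl|rfl|rfl
      · exact htI
      all_goals rw [Set.mem_Icc]; constructor <;> norm_num
    have hG0 : ∀ x ∈ S0, Gf h f w2 c 0 x = 0 := by
      intro x hx
      have hGf0 : ∀ y : ℝ, Gf h f w2 c 0 y = h y - f.eval y - c * w2.eval y := by
        intro y; simp [Gf, iteratedDerivWithin_zero]
      rw [hGf0]
      simp only [hS0, Finset.mem_insert, Finset.mem_singleton] at hx
      rcases hx with rfl|rfl|rfl|rfl|rfl|rfl|rfl|rfl|rfl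
      · rw [hc]; field_simp; ring
      · rw [(hdouble (-1) (by norm_num)).1, show w2.eval (-1) = 0 by rw [w2_eval]; norm_num]; ring
      · rw [hsingle (-1/2) (by norm_num), show w2.eval (-1/2) = 0 by rw [w2_eval]; norm_num]; ring
      · rw [hsingle (-1/3) (by norm_num), show w2.eval (-1/3) = 0 by rw [w2_eval]; norm_num]; ring
      · rw [(hdouble (-1/6) (by norm_num)).1, show w2.eval (-1/6) = 0 by rw [w2_eval]; norm_num]; ring
      · rw [(hdouble 0 (by norm_num)).1, show w2.eval 0 = 0 by rw [w2_eval]; norm_num]; ring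
      · rw [(hdouble (1/6) (by norm_num)).1, show w2.eval (1/6) = 0 by rw [w2_eval]; norm_num]; ring
      · rw [hsingle (1/3) (by norm_num), show w2.eval (1/3) = 0 by rw [w2_eval]; norm_num]; ring
      · rw [hsingle (1/2) (by norm_num), show w2.eval (1/2) = 0 by rw [w2_eval]; norm_num]; ring
    -- first Rolle step
    obtain ⟨T0, hT0sub, hT0card, hT0zero, hT0nS, -⟩ :=
      rolle_finset (Gf h f w2 c 0) (Gf h f w2 c 1) (-1) 1
        (Gf_cont h f w2 c hsmooth 0 (by norm_num))
        (Gf_deriv h f w2 c hsmooth 0 (by norm_num)) S0.card S0 rfl hS0sub hG0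
    rw [hS0card] at hT0card
    -- G 1 vanishes at the double nodes
    have hG1node : ∀ a ∈ ({-1, -1/6, 0, 1/6} : Set ℝ), Gf h f w2 c 1 a = 0 := by
      intro a ha
      have haI : a ∈ Set.Icc (-1 : ℝ) 1 := by
        rcases ha with rfl|rfl|rfl|rfl <;> (rw [Set.mem_Icc]; constructor <;> norm_num)
      have e1 : iteratedDerivWithin 1 h (Set.Icc (-1 : ℝ) 1) a
          = derivWithin h (Set.Icc (-1 : ℝ) 1) a := by rw [iteratedDerivWithin_one]
      have e2 : (Polynomial.derivative w2).eval a = 0 := w2_deriv_double a ha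
      have e3 : (Polynomial.derivative f).eval a
          = derivWithin h (Set.Icc (-1 : ℝ) 1) a := (hdouble a ha).2
      show iteratedDerivWithin 1 h (Set.Icc (-1 : ℝ) 1) a
          - (Polynomial.derivative^[1] f).eval a - c * (Polynomial.derivative^[1] w2).eval a = 0
      rw [e1]
      simp only [Function.iterate_one]
      rw [e2, e3]; ring
    set S1 : Finset ℝ := T0 ∪ {-1, -1/6, 0, 1/6} with hS1
    have hdisj : ∀ x ∈ T0, x ∉ ({-1, -1/6, 0, 1/6} : Finset ℝ) := by
      intro x hx hmem
      apply hT0nS x hx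
      simp only [Finset.mem_insert, Finset.mem_singleton] at hmem
      simp only [hS0, Finset.mem_insert, Finset.mem_singleton]
      tauto
    have hS1card : S1.card = 12 := card_union12 T0 (by omega) hdisj
    have hS1sub : ↑S1 ⊆ Set.Icc (-1 : ℝ) 1 := by
      intro x hx
      simp only [hS1, Finset.coe_union, Set.mem_union] at hx
      rcases hx with hx | hx
      · exact Set.Ioo_subset_Icc_self (hT0sub hx)
      · simp only [Finset.coe_insert, Set.mem_insert_iff, Finset.coe_singleton,
          Set.mem_singleton_iff] at hx
        rcases hx with rfl|rfl|rfl|rfl <;> (rw [Set.mem_Icc]; constructor <;> norm_num)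
    have hS1zero : ∀ x ∈ S1, Gf h f w2 c 1 x = 0 := by
      intro x hx
      rcases Finset.mem_union.mp hx with hx | hx
      · exact hT0zero x hx
      · apply hG1node
        simp only [Finset.mem_insert, Finset.mem_singleton] at hx
        simp only [Set.mem_insert_iff, Set.mem_singleton_iff]
        tauto
    -- iterate Rolle 11 more times
    obtain ⟨ξ, hξI, hξ0⟩ :=
      iter_rolle (-1) 1 (fun g g' hg hg' => rolle_finset g g' (-1) 1 hg hg') 10
        (fun k => Gf h f w2 c (k+1))
        (fun k hk => Gf_cont h f w2 c hsmooth (k+1) (by omega))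
        (fun k hk => Gf_deriv h f w2 c hsmooth (k+1) (by omega))
        S1 hS1sub (by omega) hS1zero
    -- conclude
    have hf12 : (Polynomial.derivative^[12] f) = 0 :=
      Polynomial.iterate_derivative_eq_zero (by omega)
    have hkey : iteratedDerivWithin 12 h (Set.Icc (-1 : ℝ) 1) ξ = c * 479001600 := by
      have h0 : Gf h f w2 c 12 ξ = 0 := hξ0
      rw [show Gf h f w2 c 12 ξ = iteratedDerivWithin 12 h (Set.Icc (-1 : ℝ) 1) ξ
          - (Polynomial.derivative^[12] f).eval ξ
          - c * (Polynomial.derivative^[12] w2).eval ξ from rfl, hf12, w2_deriv12 ξ] at h0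
      simp only [Polynomial.eval_zero, sub_zero] at h0
      linarith
    have hcnn : 0 ≤ c := by
      have := h12 ξ hξI
      rw [hkey] at this
      nlinarith
    have hfinal : h t - f.eval t = c * w2.eval t := by
      rw [hc]; field_simp
    nlinarith [mul_nonneg hcnn (le_of_lt hwpos)]
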